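/- Let A and B be m×m complex idempotent matrices (A² = A, B² = B) and let k ≥ 1 be an integer. Then rank(rowBlock((A·B)^k, (B·A)^k)) = rank(rowBlock(A, B)) + rank((A·B)^k) + rank((B·A)^k) − rank(A) − rank(B). -/

import Mathlib

open Matrix

lemma range_fromColumns' {m : ℕ} (X Y : Matrix (Fin m) (Fin m) ℂ) :
    LinearMap.range (Matrix.fromCols X Y).mulVecLin
      = LinearMap.range X.mulVecLin ⊔ LinearMap.range Y.mulVecLin := by
  apply le_antisymm
  · rintro x ⟨v, rfl⟩
    have hv : Sum.elim (v ∘ Sum.inl) (v ∘ Sum.inr) = v := Sum.elim_comp_inl_inr v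
    have : Matrix.fromCols X Y *ᵥ v
        = X *ᵥ (v ∘ Sum.inl) + Y *ᵥ (v ∘ Sum.inr) := by
      rw [← Matrix.fromCols_mulVec_sumElim X Y (v ∘ Sum.inl) (v ∘ Sum.inr), hv]
    rw [Matrix.mulVecLin_apply, this]
    exact Submodule.add_mem_sup ⟨_, rfl⟩ ⟨_, rfl⟩
  · rw [sup_le_iff]
    constructor
    · rintro x ⟨v, rfl⟩
      exact ⟨Sum.elim v 0, by simp [Matrix.fromCols_mulVec_sumElim]⟩
    · rintro x ⟨v, rfl⟩
      exact ⟨Sum.elim 0 v, by simp [Matrix.fromCols_mulVec_sumElim]⟩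

lemma mem_range_idem {m : ℕ} {A : Matrix (Fin m) (Fin m) ℂ} (hA : A * A = A)
    {x : Fin m → ℂ} : x ∈ LinearMap.range A.mulVecLin ↔ A *ᵥ x = x := by
  constructor
  · rintro ⟨v, rfl⟩
    simp only [Matrix.mulVecLin_apply, Matrix.mulVec_mulVec, hA]
  · intro h
    exact ⟨x, h⟩

lemma inter_eq {m : ℕ} (A B : Matrix (Fin m) (Fin m) ℂ)
    (hA : A * A = A) (hB : B * B = B) (k : ℕ) (hk : 1 ≤ k) :
    LinearMap.range ((A * B) ^ k).mulVecLin ⊓ LinearMap.range ((B * A) ^ k).mulVecLin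
      = LinearMap.range A.mulVecLin ⊓ LinearMap.range B.mulVecLin := by
  obtain ⟨k', rfl⟩ := Nat.exists_eq_add_of_le' hk
  apply le_antisymm
  · rintro x hx
    obtain ⟨⟨v, rfl⟩, ⟨w, hw⟩⟩ := Submodule.mem_inf.mp hx
    rw [Submodule.mem_inf]
    constructor
    · refine ⟨(B * (A * B) ^ k') *ᵥ v, ?_⟩
      simp only [Matrix.mulVecLin_apply, Matrix.mulVec_mulVec]
      rw [← mul_assoc, ← pow_succ']
    · refine ⟨(A * (B * A) ^ k') *ᵥ w, ?_⟩
      rw [← hw]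
      simp only [Matrix.mulVecLin_apply, Matrix.mulVec_mulVec]
      rw [← mul_assoc, ← pow_succ']
  · rintro x hx
    obtain ⟨hxA, hxB⟩ := Submodule.mem_inf.mp hx
    rw [mem_range_idem hA] at hxA
    rw [mem_range_idem hB] at hxB
    have hAB : ∀ j : ℕ, (A * B) ^ j *ᵥ x = x := by
      intro j
      induction j with
      | zero => simp
      | succ n ih =>
        rw [pow_succ, ← Matrix.mulVec_mulVec, ← Matrix.mulVec_mulVec, hxB, hxA, ih]
    have hBA : ∀ j : ℕ, (B * A) ^ j *ᵥ x = x := by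
      intro j
      induction j with
      | zero => simp
      | succ n ih =>
        rw [pow_succ, ← Matrix.mulVec_mulVec, ← Matrix.mulVec_mulVec, hxA, hxB, ih]
    exact Submodule.mem_inf.mpr ⟨⟨x, hAB (k' + 1)⟩, ⟨x, hBA (k' + 1)⟩⟩

/-- For idempotent `A`, `B` and `k ≥ 1`:
`rank [(AB)^k, (BA)^k] = rank [A, B] + rank (AB)^k + rank (BA)^k - rank A - rank B`. -/
theorem stmt_3 (m : ℕ) (A B : Matrix (Fin m) (Fin m) ℂ)
    (hA : A * A = A) (hB : B * B = B) (k : ℕ) (hk : 1 ≤ k) :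
    ((Matrix.fromCols ((A * B) ^ k) ((B * A) ^ k)).rank : ℤ) =
      ((Matrix.fromCols A B).rank : ℤ) + (((A * B) ^ k).rank : ℤ)
        + (((B * A) ^ k).rank : ℤ) - (A.rank : ℤ) - (B.rank : ℤ) := by
  have hinter := inter_eq A B hA hB k hk
  have key1 := Submodule.finrank_sup_add_finrank_inf_eq
    (LinearMap.range ((A * B) ^ k).mulVecLin) (LinearMap.range ((B * A) ^ k).mulVecLin)
  have key2 := Submodule.finrank_sup_add_finrank_inf_eq
    (LinearMap.range A.mulVecLin) (LinearMap.range B.mulVecLin)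
  rw [hinter] at key1
  have hr1 : (Matrix.fromCols ((A * B) ^ k) ((B * A) ^ k)).rank
      = Module.finrank ℂ ↥(LinearMap.range ((A * B) ^ k).mulVecLin
        ⊔ LinearMap.range ((B * A) ^ k).mulVecLin) := by
    rw [Matrix.rank, range_fromColumns']
  have hr2 : (Matrix.fromCols A B).rank
      = Module.finrank ℂ ↥(LinearMap.range A.mulVecLin ⊔ LinearMap.range B.mulVecLin) := by
    rw [Matrix.rank, range_fromColumns']
  have e1 : (Matrix.fromCols ((A * B) ^ k) ((B * A) ^ k)).rank
      + Module.finrank ℂ ↥(LinearMap.range A.mulVecLin ⊓ LinearMap.range B.mulVecLin)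
      = ((A * B) ^ k).rank + ((B * A) ^ k).rank := by
    rw [hr1]; exact key1
  have e2 : (Matrix.fromCols A B).rank
      + Module.finrank ℂ ↥(LinearMap.range A.mulVecLin ⊓ LinearMap.range B.mulVecLin)
      = A.rank + B.rank := by
    rw [hr2]; exact key2
  omega
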